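/- arXiv:1410.7033 — 4 statements merged into one kernel-verified Lean document; each statement's English description precedes it below -/
import Mathlib

section
/- Let μ be a finite positive Borel measure on the unit sphere S^{n-1} ⊂ ℝⁿ (n ≥ 2) with the property that for every s > 0, ∫_{S^{n-1}} (s²x₁² + s⁻²x₂² + x₃² + ⋯ + x_n²)^{1/2} dμ(x) = μ(S^{n-1}). Then μ is supported on {x : x₁ = 0}. -/
open MeasureTheory

theorem stmt_8 (m : ℕ) (μ : Measure (EuclideanSpace ℝ (Fin (m + 2))))
    [IsFiniteMeasure μ]
    (hsph : μ (Metric.sphere (0 : EuclideanSpace ℝ (Fin (m + 2))) 1)ᶜ = 0)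
    (hint : ∀ s : ℝ, 0 < s →
      ∫ x, Real.sqrt (s ^ 2 * (x 0) ^ 2 + (s ^ 2)⁻¹ * (x 1) ^ 2 +
        ∑ i ∈ Finset.univ.filter (fun i : Fin (m + 2) => 2 ≤ (i : ℕ)), (x i) ^ 2) ∂μ =
      (μ Set.univ).toReal) :
    μ {x : EuclideanSpace ℝ (Fin (m + 2)) | x 0 ≠ 0} = 0 := by
  classical
  -- a.e. every point lies on the unit sphere
  have hae : ∀ᵐ x ∂μ, ‖x‖ = 1 := by
    have h1 : ∀ᵐ x ∂μ, x ∈ Metric.sphere (0 : EuclideanSpace ℝ (Fin (m + 2))) 1 := by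
      rw [ae_iff]
      exact hsph
    filter_upwards [h1] with x hx
    simpa [mem_sphere_zero_iff_norm] using hx
  -- sum of squares is 1 a.e.
  have hsum : ∀ᵐ x ∂μ, ∑ i : Fin (m + 2), (x i) ^ 2 = 1 := by
    filter_upwards [hae] with x hx
    have h := congrArg (fun t => t ^ 2) hx
    simp only [one_pow] at h
    rw [EuclideanSpace.norm_eq] at h
    rw [Real.sq_sqrt (Finset.sum_nonneg fun i _ => sq_nonneg _)] at h
    simpa [Real.norm_eq_abs, sq_abs] using h
  have hcont0 : Continuous fun x : EuclideanSpace ℝ (Fin (m + 2)) => x 0 :=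
    (continuous_apply _).comp (PiLp.continuous_ofLp _ _)
  have habs_meas : AEStronglyMeasurable (fun x : EuclideanSpace ℝ (Fin (m + 2)) => |x 0|) μ :=
    (hcont0.abs).aestronglyMeasurable
  -- each coordinate square is at most the full sum of squares
  have hcoord : ∀ (x : EuclideanSpace ℝ (Fin (m + 2))) (i : Fin (m + 2)),
      (x i) ^ 2 ≤ ∑ j : Fin (m + 2), (x j) ^ 2 := fun x i =>
    Finset.single_le_sum (fun j _ => sq_nonneg (x j)) (Finset.mem_univ i)
  have hint0 : Integrable (fun x : EuclideanSpace ℝ (Fin (m + 2)) => |x 0|) μ := by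
    refine (integrable_const (1 : ℝ)).mono' habs_meas ?_
    filter_upwards [hsum] with x hx
    rw [Real.norm_eq_abs, abs_abs, ← Real.sqrt_one, ← hx, ← Real.sqrt_sq_eq_abs]
    exact Real.sqrt_le_sqrt (hcoord x 0)
  set I := ∫ x, |x 0| ∂μ with hIdef
  have hI0 : 0 ≤ I := integral_nonneg fun x => abs_nonneg _
  have key : ∀ s : ℝ, 0 < s → s * I ≤ (μ Set.univ).toReal := by
    intro s hs
    set f : EuclideanSpace ℝ (Fin (m + 2)) → ℝ := fun x =>
      Real.sqrt (s ^ 2 * (x 0) ^ 2 + (s ^ 2)⁻¹ * (x 1) ^ 2 +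
        ∑ i ∈ Finset.univ.filter (fun i : Fin (m + 2) => 2 ≤ (i : ℕ)), (x i) ^ 2) with hf
    have hfcont : Continuous f := by
      apply Real.continuous_sqrt.comp
      apply Continuous.add
      · exact (continuous_const.mul (((continuous_apply _).comp (PiLp.continuous_ofLp _ _)).pow 2)).add
          (continuous_const.mul (((continuous_apply _).comp (PiLp.continuous_ofLp _ _)).pow 2))
      · exact continuous_finset_sum _ fun i _ => ((continuous_apply _).comp (PiLp.continuous_ofLp _ _)).pow 2
    have hfint : Integrable f μ := by
      refine (integrable_const (Real.sqrt (s ^ 2 + (s ^ 2)⁻¹ + 1))).mono'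
        hfcont.aestronglyMeasurable ?_
      filter_upwards [hsum] with x hx
      rw [Real.norm_eq_abs, abs_of_nonneg (Real.sqrt_nonneg _)]
      apply Real.sqrt_le_sqrt
      have h0 : (x 0) ^ 2 ≤ 1 := hx ▸ hcoord x 0
      have h1 : (x 1) ^ 2 ≤ 1 := hx ▸ hcoord x 1
      have h2 : ∑ i ∈ Finset.univ.filter (fun i : Fin (m + 2) => 2 ≤ (i : ℕ)), (x i) ^ 2 ≤ 1 := by
        rw [← hx]
        exact Finset.sum_le_sum_of_subset_of_nonneg (Finset.filter_subset _ _)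
          fun i _ _ => sq_nonneg _
      have hs2 : (0 : ℝ) < s ^ 2 := by positivity
      nlinarith [sq_nonneg (x 0), sq_nonneg (x 1), inv_pos.mpr hs2]
    have hmono : ∀ x, s * |x 0| ≤ f x := by
      intro x
      have h1 : s * |x 0| = Real.sqrt (s ^ 2 * (x 0) ^ 2) := by
        rw [Real.sqrt_mul (sq_nonneg s), Real.sqrt_sq hs.le, Real.sqrt_sq_eq_abs]
      rw [h1]
      apply Real.sqrt_le_sqrt
      have hsumnn : (0 : ℝ) ≤ ∑ i ∈ Finset.univ.filter
          (fun i : Fin (m + 2) => 2 ≤ (i : ℕ)), (x i) ^ 2 :=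
        Finset.sum_nonneg fun i _ => sq_nonneg _
      have hs2 : (0 : ℝ) ≤ (s ^ 2)⁻¹ * (x 1) ^ 2 := by positivity
      linarith
    calc s * I = ∫ x, s * |x 0| ∂μ := (integral_const_mul s _).symm
      _ ≤ ∫ x, f x ∂μ := integral_mono (hint0.const_mul s) hfint hmono
      _ = (μ Set.univ).toReal := hint s hs
  have hIzero : I = 0 := by
    by_contra h
    have hIpos : 0 < I := lt_of_le_of_ne hI0 (Ne.symm h)
    have hs : 0 < ((μ Set.univ).toReal + 1) / I := by
      have : (0:ℝ) ≤ (μ Set.univ).toReal := ENNReal.toReal_nonneg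
      positivity
    have hk := key _ hs
    rw [div_mul_cancel₀ _ (ne_of_gt hIpos)] at hk
    linarith
  have hzero : ∀ᵐ x ∂μ, |x 0| = 0 :=
    (integral_eq_zero_iff_of_nonneg (fun x => abs_nonneg _) hint0).mp hIzero
  have : ∀ᵐ x ∂μ, x 0 = 0 := by
    filter_upwards [hzero] with x hx
    exact abs_eq_zero.mp hx
  simpa [ae_iff] using this
end

section
/- Let p ≤ 0 and let μ be a finite positive Borel measure on S^{n-1} ⊂ ℝⁿ (n ≥ 2) such that for all s > 0, μ(S^{n-1}) = s · ∫_{S^{n-1}} (x₁²/s² + x₂² + ⋯ + x_n²)^{p/2} dμ(x). Then μ = 0. -/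
open MeasureTheory

theorem stmt_9 (m : ℕ) (p : ℝ) (hp : p ≤ 0)
    (μ : Measure (EuclideanSpace ℝ (Fin (m + 2)))) [IsFiniteMeasure μ]
    (hsph : μ (Metric.sphere (0 : EuclideanSpace ℝ (Fin (m + 2))) 1)ᶜ = 0)
    (hint : ∀ s : ℝ, 0 < s →
      (μ Set.univ).toReal =
        s * ∫ x, ((x 0) ^ 2 / s ^ 2 +
          ∑ i ∈ Finset.univ.filter (fun i : Fin (m + 2) => 1 ≤ (i : ℕ)), (x i) ^ 2) ^ (p / 2) ∂μ) :
    μ = 0 := by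
  set s : ℝ := 2 - p with hs
  have hs2 : (2:ℝ) ≤ s := by simp [hs]; linarith
  have hs0 : (0:ℝ) < s := by linarith
  set c : ℝ := (1 + 1/s^2) ^ (p/2) with hc
  have hb : (0:ℝ) < 1 + 1/s^2 := by positivity
  have hc_ge : 1 - 1/(2*s) ≤ c := by
    have h1 : Real.log (1 + 1/s^2) ≤ 1/s^2 := by
      have := Real.log_le_sub_one_of_pos hb
      linarith
    have h2 : (p/2) * (1/s^2) ≤ (p/2) * Real.log (1 + 1/s^2) :=
      mul_le_mul_of_nonpos_left h1 (by linarith)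
    have h3 : c = Real.exp ((p/2) * Real.log (1 + 1/s^2)) := by
      rw [hc, Real.rpow_def_of_pos hb, mul_comm]
    have h4 : 1 + (p/2) * (1/s^2) ≤ Real.exp ((p/2)*(1/s^2)) := by
      have := Real.add_one_le_exp ((p/2)*(1/s^2)); linarith
    have h5 : Real.exp ((p/2)*(1/s^2)) ≤ c := by
      rw [h3]; exact Real.exp_le_exp.mpr h2
    have hps : -p ≤ s := by linarith
    have key : -1/(2*s) ≤ p/(2*s^2) := by
      rw [div_le_div_iff₀ (by positivity) (by positivity)]
      nlinarith
    rw [neg_div] at key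
    have e1 : p/2 * (1/s^2) = p/(2*s^2) := by rw [div_mul_div_comm, mul_one]
    linarith
  have hc_pos : (0:ℝ) < c := by positivity
  have hsc : (3:ℝ)/2 ≤ s * c := by
    have := mul_le_mul_of_nonneg_left hc_ge (le_of_lt hs0)
    have : s * (1 - 1/(2*s)) = s - 1/2 := by field_simp
    nlinarith
  have hM := hint s hs0
  have hMz : (μ Set.univ).toReal = 0 := by
    by_cases hf : Integrable (fun x : EuclideanSpace ℝ (Fin (m + 2)) =>
        ((x 0) ^ 2 / s ^ 2 +
          ∑ i ∈ Finset.univ.filter (fun i : Fin (m + 2) => 1 ≤ (i : ℕ)), (x i) ^ 2) ^ (p / 2)) μ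
    · have hae : ∀ᵐ x ∂μ, x ∈ Metric.sphere (0 : EuclideanSpace ℝ (Fin (m + 2))) 1 := by
        rw [ae_iff]
        exact hsph
      have hle : ∀ᵐ x ∂μ, c ≤ ((x 0) ^ 2 / s ^ 2 +
          ∑ i ∈ Finset.univ.filter (fun i : Fin (m + 2) => 1 ≤ (i : ℕ)), (x i) ^ 2) ^ (p / 2) := by
        filter_upwards [hae] with x hx
        have hnorm : ‖x‖ = 1 := by simpa using hx
        have hsum : ∑ i, (x i)^2 = 1 := by
          have h := EuclideanSpace.norm_eq x
          rw [hnorm] at h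
          have h2 : Real.sqrt (∑ i, ‖x i‖ ^ 2) = 1 := h.symm
          have h3 : ∑ i, ‖x i‖ ^ 2 = 1 := by
            have := Real.sq_sqrt (by positivity : (0:ℝ) ≤ ∑ i, ‖x i‖ ^ 2)
            rw [h2] at this; linarith
          simpa [Real.norm_eq_abs, sq_abs] using h3
        have hfilter : (Finset.univ.filter (fun i : Fin (m + 2) => 1 ≤ (i : ℕ)))
            = Finset.univ.erase 0 := by
          ext i
          simp only [Finset.mem_filter, Finset.mem_univ, true_and, Finset.mem_erase, and_true, Nat.one_le_iff_ne_zero, ne_eq, Fin.ext_iff, Fin.val_zero]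
        have hrest : ∑ i ∈ Finset.univ.filter (fun i : Fin (m + 2) => 1 ≤ (i : ℕ)), (x i)^2
            = 1 - (x 0)^2 := by
          rw [hfilter]
          have h7 : ∑ i ∈ Finset.univ.erase 0, (x i)^2 + (x 0)^2 = 1 := by
            have := Finset.sum_erase_add Finset.univ (fun i => (x i)^2)
              (Finset.mem_univ (0 : Fin (m + 2)))
            simpa [hsum] using this
          linarith
        rw [hrest]
        have hx0 : (x 0)^2 ≤ 1 := by
          have h0 : 0 ≤ ∑ i ∈ Finset.univ.filter (fun i : Fin (m + 2) => 1 ≤ (i : ℕ)), (x i)^2 :=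
            Finset.sum_nonneg fun i _ => sq_nonneg _
          rw [hrest] at h0; linarith
        have hu : (0:ℝ) < 1/s^2 := by positivity
        have hu1 : 1/s^2 ≤ 1 := by
          rw [div_le_one (by positivity)]; nlinarith
        have e : (x 0)^2 / s^2 = (x 0)^2 * (1/s^2) := by ring
        have ha0 : 0 < (x 0)^2 / s^2 + (1 - (x 0)^2) := by
          nlinarith [e, mul_nonneg (by linarith : (0:ℝ) ≤ 1 - 1/s^2)
            (by linarith : 0 ≤ 1 - (x 0)^2)]
        have hab : (x 0)^2 / s^2 + (1 - (x 0)^2) ≤ 1 + 1/s^2 := by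
          nlinarith [e, mul_nonneg (sq_nonneg (x 0)) (by linarith : (0:ℝ) ≤ 1 - 1/s^2)]
        exact Real.rpow_le_rpow_of_nonpos ha0 hab (by linarith)
      have hint1 : ∫ _x, c ∂μ ≤ ∫ x, ((x 0) ^ 2 / s ^ 2 +
          ∑ i ∈ Finset.univ.filter (fun i : Fin (m + 2) => 1 ≤ (i : ℕ)), (x i) ^ 2) ^ (p / 2) ∂μ :=
        integral_mono_ae (integrable_const c) hf hle
      rw [integral_const, smul_eq_mul, measureReal_def] at hint1
      have hM0 : 0 ≤ (μ Set.univ).toReal := ENNReal.toReal_nonneg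
      have hMle : (μ Set.univ).toReal ≤ 0 := by
        nlinarith [mul_le_mul_of_nonneg_left hint1 (le_of_lt hs0),
          mul_le_mul_of_nonneg_left hsc hM0]
      linarith
    · rw [integral_undef hf, mul_zero] at hM
      exact hM
  have huniv : μ Set.univ = 0 := by
    have hne := measure_ne_top μ Set.univ
    exact (ENNReal.toReal_eq_zero_iff _).mp hMz |>.resolve_right hne
  exact Measure.measure_univ_eq_zero.mp huniv
end

section
/- Let n ≥ 3, p < 0, and define φ_λ ∈ SL(n,ℝ) by φ_λe₁ = e₁, φ_λe₂ = (1−λ)e₁ + λe₂, φ_λe_k = e_k for k ≥ 3. With f_p(x) = ((x₁−x₂)² + x₂² + ⋯ + x_n²)^{p/2}, for every x ∈ S^{n-1} one has lim_{λ→0⁺} f_p(φ_λ^{-t} x) = 𝟙_{{x₁ = x₂}}(x) · f_p(x), and the family (λ,x) ↦ f_p(φ_λ^{-t}x) is uniformly bounded on (0,1) × S^{n-1}. -/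
open Set Filter

/-- `f_p(x) = ((x₁−x₂)² + x₂² + ⋯ + x_n²)^{p/2}`. -/
noncomputable def fp {m : ℕ} (p : ℝ) (x : EuclideanSpace ℝ (Fin (m + 3))) : ℝ :=
  ((x 0 - x 1) ^ 2 + (x 1) ^ 2 +
    ∑ i ∈ Finset.univ.filter (fun i : Fin (m + 3) => 2 ≤ (i : ℕ)), (x i) ^ 2) ^ (p / 2)

/-- `f_p(φ_λ^{-t} x) = (((x₁−x₂)/λ)² + (x₁ + (x₂−x₁)/λ)² + x₃² + ⋯ + x_n²)^{p/2}`. -/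
noncomputable def fpPhi {m : ℕ} (p l : ℝ) (x : EuclideanSpace ℝ (Fin (m + 3))) : ℝ :=
  (((x 0 - x 1) / l) ^ 2 + (x 0 + (x 1 - x 0) / l) ^ 2 +
    ∑ i ∈ Finset.univ.filter (fun i : Fin (m + 3) => 2 ≤ (i : ℕ)), (x i) ^ 2) ^ (p / 2)

lemma sum_sq_split {m : ℕ} (x : EuclideanSpace ℝ (Fin (m + 3))) :
    (x 0) ^ 2 + (x 1) ^ 2 +
      ∑ i ∈ Finset.univ.filter (fun i : Fin (m + 3) => 2 ≤ (i : ℕ)), (x i) ^ 2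
      = ∑ i, (x i) ^ 2 := by
  rw [← Finset.sum_filter_add_sum_filter_not Finset.univ (fun i : Fin (m + 3) => 2 ≤ (i : ℕ))
    (fun i => (x i) ^ 2)]
  have h : Finset.univ.filter (fun i : Fin (m + 3) => ¬ 2 ≤ (i : ℕ))
      = {(0 : Fin (m + 3)), 1} := by
    ext i
    simp only [Finset.mem_filter, Finset.mem_univ, true_and, Finset.mem_insert,
      Finset.mem_singleton, not_le]
    constructor
    · intro hi
      have : (i : ℕ) = 0 ∨ (i : ℕ) = 1 := by omega
      rcases this with h0 | h1
      · left; ext; simpa using h0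
      · right; ext; simpa using h1
    · rintro (rfl | rfl) <;> simp
  have hne : (0 : Fin (m + 3)) ≠ 1 := by simp [Fin.ext_iff]
  rw [h, Finset.sum_pair hne]
  ring

lemma sphere_sum_sq {m : ℕ} {x : EuclideanSpace ℝ (Fin (m + 3))}
    (hx : x ∈ Metric.sphere (0 : EuclideanSpace ℝ (Fin (m + 3))) 1) :
    (x 0) ^ 2 + (x 1) ^ 2 +
      ∑ i ∈ Finset.univ.filter (fun i : Fin (m + 3) => 2 ≤ (i : ℕ)), (x i) ^ 2 = 1 := by
  rw [sum_sq_split]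
  have h1 : ‖x‖ = 1 := by simpa using hx
  have h3 := EuclideanSpace.norm_eq x
  rw [h1] at h3
  have hnn : (0 : ℝ) ≤ ∑ i, ‖x i‖ ^ 2 :=
    Finset.sum_nonneg fun i _ => sq_nonneg _
  have h2 : ∑ i, ‖x i‖ ^ 2 = 1 := by
    nlinarith [Real.sq_sqrt hnn]
  simpa [Real.norm_eq_abs, sq_abs] using h2

theorem stmt_12 (m : ℕ) (p : ℝ) (hp : p < 0) :
    (∀ x ∈ Metric.sphere (0 : EuclideanSpace ℝ (Fin (m + 3))) 1,
      Filter.Tendsto (fun l : ℝ => fpPhi p l x) (nhdsWithin 0 (Set.Ioi 0))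
        (nhds (Set.indicator {y : EuclideanSpace ℝ (Fin (m + 3)) | y 0 = y 1} (fp p) x))) ∧
    ∃ C : ℝ, ∀ l ∈ Set.Ioo (0 : ℝ) 1,
      ∀ x ∈ Metric.sphere (0 : EuclideanSpace ℝ (Fin (m + 3))) 1, |fpPhi p l x| ≤ C := by
  constructor
  · intro x hx
    set S := ∑ i ∈ Finset.univ.filter (fun i : Fin (m + 3) => 2 ≤ (i : ℕ)), (x i) ^ 2 with hS
    have hSnn : 0 ≤ S := Finset.sum_nonneg fun i _ => sq_nonneg _
    by_cases h01 : x 0 = x 1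
    · -- constant function
      have hxmem : x ∈ {y : EuclideanSpace ℝ (Fin (m + 3)) | y 0 = y 1} := h01
      rw [Set.indicator_of_mem hxmem]
      have hfun : ∀ l : ℝ, fpPhi p l x = fp p x := by
        intro l
        simp only [fpPhi, fp, h01, sub_self, zero_div, ← hS]
        ring_nf
      rw [show (fun l : ℝ => fpPhi p l x) = fun _ : ℝ => fp p x from funext hfun]
      exact tendsto_const_nhds
    · have hxmem : x ∉ {y : EuclideanSpace ℝ (Fin (m + 3)) | y 0 = y 1} := h01
      rw [Set.indicator_of_notMem hxmem]
      set A := (x 0 - x 1) ^ 2 with hA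
      have hne : x 0 - x 1 ≠ 0 := sub_ne_zero.mpr h01
      have hApos : 0 < A := by positivity
      have hg : Tendsto (fun l : ℝ => (A / l ^ 2) ^ (p / 2)) (nhdsWithin 0 (Set.Ioi 0))
          (nhds 0) := by
        have hsq : Tendsto (fun l : ℝ => l ^ 2) (nhdsWithin 0 (Set.Ioi 0))
            (nhdsWithin 0 (Set.Ioi 0)) := by
          apply tendsto_nhdsWithin_of_tendsto_nhds_of_eventually_within
          · have : Tendsto (fun l : ℝ => l ^ 2) (nhds 0) (nhds 0) := by
              simpa using (continuous_pow 2).tendsto (0 : ℝ)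
            exact this.mono_left nhdsWithin_le_nhds
          · filter_upwards [self_mem_nhdsWithin] with l (hl : 0 < l)
            exact pow_pos hl 2
        have h1 : Tendsto (fun l : ℝ => A / l ^ 2) (nhdsWithin 0 (Set.Ioi 0)) atTop := by
          have := (tendsto_inv_nhdsGT_zero.comp hsq).const_mul_atTop hApos
          simpa [div_eq_mul_inv, Function.comp] using this
        have h2 : Tendsto (fun t : ℝ => t ^ (p / 2)) atTop (nhds 0) := by
          have := tendsto_rpow_neg_atTop (y := -(p / 2)) (by linarith)
          simpa using this
        exact h2.comp h1
      apply tendsto_of_tendsto_of_tendsto_of_le_of_le' tendsto_const_nhds hg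
      · filter_upwards with l
        exact Real.rpow_nonneg (by positivity) _
      · filter_upwards [self_mem_nhdsWithin] with l (hl : 0 < l)
        rw [fpPhi, ← hS]
        have hbase : A / l ^ 2 ≤ ((x 0 - x 1) / l) ^ 2 + (x 0 + (x 1 - x 0) / l) ^ 2 + S := by
          have heq : A / l ^ 2 = ((x 0 - x 1) / l) ^ 2 := by
            rw [hA]; field_simp
          nlinarith [sq_nonneg (x 0 + (x 1 - x 0) / l)]
        have h0 : 0 < A / l ^ 2 := by positivity
        exact Real.rpow_le_rpow_of_nonpos h0 hbase (by linarith)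
  · refine ⟨(1 / 12 : ℝ) ^ (p / 2), fun l hl x hx => ?_⟩
    set S := ∑ i ∈ Finset.univ.filter (fun i : Fin (m + 3) => 2 ≤ (i : ℕ)), (x i) ^ 2 with hS
    have hSnn : 0 ≤ S := Finset.sum_nonneg fun i _ => sq_nonneg _
    have hsum := sphere_sum_sq hx
    rw [← hS] at hsum
    obtain ⟨hl0, hl1⟩ := hl
    have hbase : (1 : ℝ) / 12 ≤ ((x 0 - x 1) / l) ^ 2 + (x 0 + (x 1 - x 0) / l) ^ 2 + S := by
      set u := (x 0 - x 1) / l with hu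
      have hul : u * l = x 0 - x 1 := by rw [hu]; field_simp [hl0.ne']
      have hxl : (x 0 - x 1) ^ 2 = u ^ 2 * l ^ 2 := by rw [← hul]; ring
      have h1 : (x 0 - x 1) ^ 2 ≤ u ^ 2 := by
        rw [hxl]
        nlinarith [sq_nonneg u, mul_nonneg (sq_nonneg u) (by nlinarith : (0:ℝ) ≤ 1 - l ^ 2)]
      have hux : x 0 + (x 1 - x 0) / l = x 0 - u := by rw [hu]; ring_nf
      rw [hux]
      nlinarith [sq_nonneg (x 0 - 2 * u), sq_nonneg (x 0 - x 1)]
    have hnn : 0 ≤ ((x 0 - x 1) / l) ^ 2 + (x 0 + (x 1 - x 0) / l) ^ 2 + S :=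
      add_nonneg (add_nonneg (sq_nonneg _) (sq_nonneg _)) hSnn
    rw [fpPhi, ← hS, abs_of_nonneg (Real.rpow_nonneg hnn _)]
    exact Real.rpow_le_rpow_of_nonpos (by norm_num) hbase (by linarith)
end

section
/- Let n ≥ 3 and let μ be a finite Borel measure on S^{n-1} that is invariant under all coordinate permutations and is supported on the set ⋂{ {x_i = 0} ∪ {x_j = x_k} : 1 ≤ i,j,k ≤ n pairwise distinct }. Then μ is supported on the finite set {±e₁, ..., ±e_n, ±(e₁+⋯+e_n)/√n}. -/
open MeasureTheory

lemma stmt_13_aux_single (n : ℕ) (x : EuclideanSpace ℝ (Fin n)) (t : Fin n)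
    (h0 : ∀ i, i ≠ t → x i = 0) (hn : ‖x‖ = 1) :
    x = EuclideanSpace.single t (1 : ℝ) ∨ x = -EuclideanSpace.single t (1 : ℝ) := by
  have hx : x = EuclideanSpace.single t (x t) := by
    ext i
    rcases eq_or_ne i t with rfl | h
    · simp [EuclideanSpace.single_apply]
    · simp [EuclideanSpace.single_apply, h, h0 i h]
  have habs : |x t| = 1 := by
    rw [hx, EuclideanSpace.norm_single] at hn
    simpa using hn
  rcases abs_eq (by norm_num : (0:ℝ) ≤ 1) |>.mp habs with h1 | h1
  · left; rw [hx, h1]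
  · right; rw [hx, h1]
    ext i
    simp [EuclideanSpace.single_apply]
    split <;> simp

theorem stmt_13 (m : ℕ) (μ : Measure (EuclideanSpace ℝ (Fin (m + 3))))
    [IsFiniteMeasure μ]
    (hsph : μ (Metric.sphere (0 : EuclideanSpace ℝ (Fin (m + 3))) 1)ᶜ = 0)
    (hperm : ∀ σ : Equiv.Perm (Fin (m + 3)),
      Measure.map (fun x : EuclideanSpace ℝ (Fin (m + 3)) => (WithLp.toLp 2 (fun i => x (σ i)) :
        EuclideanSpace ℝ (Fin (m + 3)))) μ = μ)
    (hsupp : μ (⋂ (i : Fin (m + 3)) (j : Fin (m + 3)) (k : Fin (m + 3))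
      (_ : i ≠ j) (_ : i ≠ k) (_ : j ≠ k),
      ({x : EuclideanSpace ℝ (Fin (m + 3)) | x i = 0} ∪
        {x : EuclideanSpace ℝ (Fin (m + 3)) | x j = x k}))ᶜ = 0) :
    μ ({x : EuclideanSpace ℝ (Fin (m + 3)) |
        (∃ i, x = EuclideanSpace.single i (1 : ℝ) ∨ x = -EuclideanSpace.single i (1 : ℝ)) ∨
        x = (Real.sqrt (m + 3))⁻¹ •
          (∑ i, EuclideanSpace.single i (1 : ℝ) : EuclideanSpace ℝ (Fin (m + 3))) ∨
        x = -((Real.sqrt (m + 3))⁻¹ •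
          (∑ i, EuclideanSpace.single i (1 : ℝ) : EuclideanSpace ℝ (Fin (m + 3))))})ᶜ = 0 := by
  refine measure_mono_null (fun x hx => ?_) (measure_union_null hsph hsupp)
  by_contra hxc
  simp only [Set.mem_union, Set.mem_compl_iff, not_or, not_not] at hxc
  obtain ⟨hS, hT⟩ := hxc
  have hnorm : ‖x‖ = 1 := by simpa using mem_sphere_zero_iff_norm.mp hS
  have hT' : ∀ i j k : Fin (m + 3), i ≠ j → i ≠ k → j ≠ k → x i = 0 ∨ x j = x k := by
    intro i j k hij hik hjk
    have := Set.mem_iInter.mp hT i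
    have := Set.mem_iInter.mp this j
    have := Set.mem_iInter.mp this k
    have := Set.mem_iInter.mp this hij
    have := Set.mem_iInter.mp this hik
    have := Set.mem_iInter.mp this hjk
    simpa using this
  apply hx
  simp only [Set.mem_setOf_eq]
  by_cases hall : ∀ i j : Fin (m + 3), x i = x j
  · -- all coordinates equal
    right
    have hsum : ∀ i : Fin (m + 3),
        (∑ j, EuclideanSpace.single j (1 : ℝ) : EuclideanSpace ℝ (Fin (m + 3))) i = 1 := by
      intro i
      have : (∑ j, EuclideanSpace.single j (1 : ℝ) : EuclideanSpace ℝ (Fin (m + 3))) i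
          = ∑ j, (EuclideanSpace.single j (1 : ℝ) : EuclideanSpace ℝ (Fin (m + 3))) i :=
        by rw [WithLp.ofLp_sum, Finset.sum_apply]
      rw [this]
      simp [EuclideanSpace.single_apply]
    have hxc : x = (x 0) • (∑ j, EuclideanSpace.single j (1 : ℝ)
        : EuclideanSpace ℝ (Fin (m + 3))) := by
      ext i
      have : ((x 0) • (∑ j, EuclideanSpace.single j (1 : ℝ)
          : EuclideanSpace ℝ (Fin (m + 3)))) i = x 0 * (∑ j, EuclideanSpace.single j (1 : ℝ)
          : EuclideanSpace ℝ (Fin (m + 3))) i := rfl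
      rw [this, hsum, mul_one, hall i 0]
    have hnormsum : ‖(∑ j, EuclideanSpace.single j (1 : ℝ)
        : EuclideanSpace ℝ (Fin (m + 3)))‖ = Real.sqrt (m + 3) := by
      rw [EuclideanSpace.norm_eq]
      congr 1
      simp [hsum]
    have h1 : |x 0| * Real.sqrt (m + 3) = 1 := by
      rw [hxc, norm_smul, hnormsum] at hnorm
      simpa using hnorm
    have hsq : Real.sqrt (m + 3) ≠ 0 := by positivity
    have habs : |x 0| = (Real.sqrt (m + 3))⁻¹ := by
      field_simp at h1 ⊢
      linarith [h1]
    rcases abs_eq (by positivity : (0:ℝ) ≤ (Real.sqrt (m + 3))⁻¹) |>.mp habs with h2 | h2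
    · left; rw [hxc, h2]
    · right; rw [hxc, h2, neg_smul]
  · -- some coordinates differ
    left
    push_neg at hall
    obtain ⟨j, k, hjk'⟩ := hall
    have hjk : j ≠ k := fun h => hjk' (by rw [h])
    have hzero : ∀ i, i ≠ j → i ≠ k → x i = 0 := by
      intro i hij hik
      rcases hT' i j k hij hik hjk with h | h
      · exact h
      · exact absurd h hjk'
    -- find a third index
    have hcard : ({j, k} : Finset (Fin (m + 3))) ≠ Finset.univ := by
      intro h
      have hc : ({j, k} : Finset (Fin (m + 3))).card ≤ 2 :=
        (Finset.card_insert_le _ _).trans (by simp)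
      rw [h, Finset.card_univ, Fintype.card_fin] at hc
      omega
    obtain ⟨l, -, hl⟩ := Finset.exists_of_ssubset (Finset.ssubset_univ_iff.mpr hcard)
    simp only [Finset.mem_insert, Finset.mem_singleton, not_or] at hl
    obtain ⟨hlj, hlk⟩ := hl
    have hxl : x l = 0 := hzero l hlj hlk
    rcases hT' j k l hjk (Ne.symm hlj) (Ne.symm hlk) with hxj | hxk
    · -- x j = 0, so only coordinate k can be nonzero
      refine ⟨k, stmt_13_aux_single _ x k ?_ hnorm⟩
      intro i hik
      rcases eq_or_ne i j with rfl | hij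
      · exact hxj
      · exact hzero i hij hik
    · -- x k = x l = 0
      rw [hxl] at hxk
      refine ⟨j, stmt_13_aux_single _ x j ?_ hnorm⟩
      intro i hij
      rcases eq_or_ne i k with rfl | hik
      · exact hxk
      · exact hzero i hij hik
end
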